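/- A set S ⊆ ℕ^ℕ is Δ⁰₂ (both Σ⁰₂ and Π⁰₂ in Baire space) if and only if S_∞ = ∅. -/

import Mathlib

open Ordinal Filter Topology

/-- The first `n` values of `f` as a finite sequence. -/
def seg (f : ℕ → ℕ) (n : ℕ) : List ℕ := (List.range n).map f

/-- `[X]`: the set of infinite sequences all of whose initial segments lie in `X`. -/
def ext (X : Set (List ℕ)) : Set (ℕ → ℕ) := {f | ∀ n, seg f n ∈ X}

/-- `σ` is an initial segment of `f`. -/
def isInit (σ : List ℕ) (f : ℕ → ℕ) : Prop := seg f σ.length = σ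

/-- One step of the derivative process relative to `S`. -/
def derivStep (S : Set (ℕ → ℕ)) (X : Set (List ℕ)) : Set (List ℕ) :=
  {x ∈ X | ∃ f g : ℕ → ℕ, f ∈ ext X ∧ g ∈ ext X ∧ isInit x f ∧ isInit x g ∧ f ∈ S ∧ g ∉ S}

/-- The transfinite sequence `S_α`. -/
noncomputable def dSeq (S : Set (ℕ → ℕ)) (α : Ordinal.{0}) : Set (List ℕ) :=
  Ordinal.limitRecOn α Set.univ (fun _ X => derivStep S X)
    (fun o _ ih => ⋂ (β : Set.Iio o), ih β.1 β.2)

/-- `α(S)`: the least ordinal where the process stabilizes. -/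
noncomputable def kernelOrd (S : Set (ℕ → ℕ)) : Ordinal.{0} :=
  sInf {α | dSeq S α = dSeq S (α + 1)}

/-- `S_∞`, the kernel. -/
noncomputable def kernel (S : Set (ℕ → ℕ)) : Set (List ℕ) := dSeq S (kernelOrd S)

/-- `β(σ)`: the least ordinal `α` with `σ ∉ S_α`. -/
noncomputable def bOrd (S : Set (ℕ → ℕ)) (σ : List ℕ) : Ordinal.{0} :=
  sInf {α | σ ∉ dSeq S α}

open Classical in
/-- `S` is guessable. -/
def Guessable (S : Set (ℕ → ℕ)) : Prop :=
  ∃ G : List ℕ → ℕ, ∀ f : ℕ → ℕ,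
    Tendsto (fun n => G (seg f n)) atTop (𝓝 (if f ∈ S then 1 else 0))

/-- `Δ⁰₂`: both a countable union of closed sets and a countable intersection of open sets. -/
def IsDelta02 (S : Set (ℕ → ℕ)) : Prop :=
  (∃ F : ℕ → Set (ℕ → ℕ), (∀ n, IsClosed (F n)) ∧ S = ⋃ n, F n) ∧
  (∃ U : ℕ → Set (ℕ → ℕ), (∀ n, IsOpen (U n)) ∧ S = ⋂ n, U n)


set_option linter.unusedSectionVars false

lemma seg_length (f : ℕ → ℕ) (n : ℕ) : (seg f n).length = n := by simp [seg]

lemma seg_eq_seg_iff {f g : ℕ → ℕ} {n : ℕ} : seg f n = seg g n ↔ ∀ i < n, f i = g i := by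
  simp [seg, List.map_inj_left]

lemma isInit_seg (f : ℕ → ℕ) (n : ℕ) : isInit (seg f n) f := by
  simp [isInit, seg_length]

lemma isInit_seg_iff {f g : ℕ → ℕ} {n : ℕ} : isInit (seg f n) g ↔ ∀ i < n, g i = f i := by
  rw [isInit, seg_length, seg_eq_seg_iff]

lemma dSeq_zero (S : Set (ℕ → ℕ)) : dSeq S 0 = Set.univ := by
  simp [dSeq, Ordinal.limitRecOn_zero]

lemma dSeq_succ (S : Set (ℕ → ℕ)) (α : Ordinal) :
    dSeq S (α + 1) = derivStep S (dSeq S α) := by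
  rw [Ordinal.add_one_eq_succ]
  exact Ordinal.limitRecOn_succ _ _ _ _

lemma dSeq_limit (S : Set (ℕ → ℕ)) {o : Ordinal} (ho : Order.IsSuccLimit o) :
    dSeq S o = ⋂ (β : Set.Iio o), dSeq S β.1 := by
  exact Ordinal.limitRecOn_limit _ _ _ _ ho

lemma mem_dSeq_limit {S : Set (ℕ → ℕ)} {o : Ordinal} (ho : Order.IsSuccLimit o) {σ : List ℕ} :
    σ ∈ dSeq S o ↔ ∀ β < o, σ ∈ dSeq S β := by
  rw [dSeq_limit S ho]
  constructor
  · intro h β hβ; exact Set.mem_iInter.1 h ⟨β, hβ⟩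
  · intro h; exact Set.mem_iInter.2 fun β => h β.1 β.2

lemma derivStep_subset (S : Set (ℕ → ℕ)) (X : Set (List ℕ)) : derivStep S X ⊆ X :=
  Set.sep_subset _ _

lemma dSeq_antitone (S : Set (ℕ → ℕ)) : Antitone (dSeq S) := by
  have key : ∀ β α, α ≤ β → dSeq S β ⊆ dSeq S α := by
    intro β
    induction β using Ordinal.limitRecOn with
    | zero => intro α hα; rw [nonpos_iff_eq_zero.1 hα]
    | add_one γ ih =>
      intro α hα
      rcases Order.le_succ_iff_eq_or_le.1 hα with rfl | h
      · exact subset_rfl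
      · refine subset_trans ?_ (ih α h)
        rw [dSeq_succ]
        exact derivStep_subset _ _
    | limit o ho ih =>
      intro α hα
      rcases eq_or_lt_of_le hα with rfl | h
      · exact subset_rfl
      · intro σ hσ
        exact (mem_dSeq_limit ho).1 hσ α h
  exact fun a b hab => key b a hab

lemma dSeq_prefix_closed (S : Set (ℕ → ℕ)) (α : Ordinal) :
    ∀ (f : ℕ → ℕ) (k n : ℕ), k ≤ n → seg f n ∈ dSeq S α → seg f k ∈ dSeq S α := by
  induction α using Ordinal.limitRecOn with
  | zero => intro f k n _ _; rw [dSeq_zero]; trivial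
  | add_one γ ih =>
    intro f k n hkn hmem
    rw [dSeq_succ] at hmem ⊢
    obtain ⟨hX, g, h, hg, hh, hig, hih, hgS, hhS⟩ := hmem
    have hgf : ∀ i < n, g i = f i := isInit_seg_iff.1 hig
    have hhf : ∀ i < n, h i = f i := isInit_seg_iff.1 hih
    have hseg : seg f k = seg g k := seg_eq_seg_iff.2 fun i hi => (hgf i (lt_of_lt_of_le hi hkn)).symm
    refine ⟨hseg ▸ hg k, g, h, hg, hh, ?_, ?_, hgS, hhS⟩
    · exact isInit_seg_iff.2 fun i hi => hgf i (lt_of_lt_of_le hi hkn)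
    · exact isInit_seg_iff.2 fun i hi => hhf i (lt_of_lt_of_le hi hkn)
  | limit o ho ih =>
    intro f k n hkn hmem
    rw [mem_dSeq_limit ho] at hmem ⊢
    exact fun β hβ => ih β hβ f k n hkn (hmem β hβ)

lemma exists_dSeq_fix (S : Set (ℕ → ℕ)) : ∃ α, dSeq S α = dSeq S (α + 1) := by
  by_contra h
  push_neg at h
  have hinj : Function.Injective (dSeq S) := by
    intro a b hab
    by_contra hne
    wlog hlt : a < b generalizing a b
    · exact this hab.symm (Ne.symm hne) (((Ne.lt_or_gt hne).resolve_left hlt))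
    have h1 : dSeq S b ⊆ dSeq S (a + 1) := dSeq_antitone S ((by rwa [Ordinal.add_one_eq_succ, Order.succ_le_iff]))
    have h2 : dSeq S (a + 1) ⊆ dSeq S a := by
      rw [dSeq_succ]; exact derivStep_subset _ _
    have : dSeq S a = dSeq S (a + 1) :=
      subset_antisymm (hab ▸ h1) h2
    exact h a this
  exact not_injective_of_ordinal (dSeq S) hinj

/-- cylinder sets are open -/
lemma isOpen_cyl (f : ℕ → ℕ) (n : ℕ) : IsOpen {g : ℕ → ℕ | ∀ i < n, g i = f i} := by
  have : {g : ℕ → ℕ | ∀ i < n, g i = f i} =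
      ⋂ i ∈ Finset.range n, (fun g : ℕ → ℕ => g i) ⁻¹' {f i} := by
    ext g; simp [Finset.mem_range]
  rw [this]
  exact isOpen_biInter_finset fun i _ => (continuous_apply i).isOpen_preimage _ (isOpen_discrete _)

lemma isOpen_segMem (A : Set (List ℕ)) (n : ℕ) : IsOpen {f : ℕ → ℕ | seg f n ∈ A} := by
  rw [isOpen_iff_mem_nhds]
  intro f hf
  refine Filter.mem_of_superset ((isOpen_cyl f n).mem_nhds (by simp)) ?_
  intro g hg
  have : seg g n = seg f n := seg_eq_seg_iff.2 hg
  simpa [Set.mem_setOf_eq, this] using hf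

lemma isClosed_segMem (A : Set (List ℕ)) (n : ℕ) : IsClosed {f : ℕ → ℕ | seg f n ∈ A} := by
  rw [← isOpen_compl_iff]
  have : {f : ℕ → ℕ | seg f n ∈ A}ᶜ = {f : ℕ → ℕ | seg f n ∈ Aᶜ} := rfl
  rw [this]; exact isOpen_segMem _ _

/-- basis fact: neighborhoods contain cylinders -/
lemma cyl_subset_of_nhds {V : Set (ℕ → ℕ)} {f : ℕ → ℕ} (hV : V ∈ 𝓝 f) :
    ∃ m, {g : ℕ → ℕ | ∀ i < m, g i = f i} ⊆ V := by
  obtain ⟨O, hOV, hO, hfO⟩ := mem_nhds_iff.1 hV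
  obtain ⟨I, u, hu, hIu⟩ := isOpen_pi_iff.1 hO f hfO
  refine ⟨(I.sup id) + 1, fun g hg => hOV (hIu ?_)⟩
  intro i hi
  have : i < I.sup id + 1 := Nat.lt_succ_of_le (Finset.le_sup (f := id) hi)
  rw [hg i this]
  exact (hu i hi).2

/-- If T is a nonempty fixed point of derivStep, S is not Δ⁰₂. -/
lemma not_delta02_of_fix {S : Set (ℕ → ℕ)} {T : Set (List ℕ)}
    (hfix : T = derivStep S T) (hne : T.Nonempty) : ¬ IsDelta02 S := by
  rintro ⟨⟨F, hFc, hFS⟩, ⟨U, hUo, hUS⟩⟩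
  set C : Set (ℕ → ℕ) := ext T with hC
  have hCclosed : IsClosed C := by
    have : C = ⋂ n, {f : ℕ → ℕ | seg f n ∈ T} := by ext f; simp [hC, ext]
    rw [this]; exact isClosed_iInter fun n => isClosed_segMem _ _
  -- every node of T has extensions in C ∩ S and C \ S
  have hnode : ∀ σ ∈ T, ∃ f g : ℕ → ℕ, f ∈ C ∧ g ∈ C ∧ isInit σ f ∧ isInit σ g ∧ f ∈ S ∧ g ∉ S := by
    intro σ hσ
    have := hfix ▸ hσ
    obtain ⟨_, f, g, hf, hg, hif, hig, hfS, hgS⟩ := this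
    exact ⟨f, g, hf, hg, hif, hig, hfS, hgS⟩
  have hCne : C.Nonempty := by
    obtain ⟨σ, hσ⟩ := hne
    obtain ⟨f, g, hf, _⟩ := hnode σ hσ
    exact ⟨f, hf⟩
  haveI : Nonempty C := hCne.to_subtype
  haveI : CompleteSpace C := hCclosed.completeSpace_coe
  haveI : (uniformity C).IsCountablyGenerated := by
    rw [uniformity_subtype]
    exact Filter.comap.isCountablyGenerated _ _
  -- Baire category
  set K : ℕ × Bool → Set C := fun p =>
    (Subtype.val) ⁻¹' (if p.2 then F p.1 else (U p.1)ᶜ) with hK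
  have hKclosed : ∀ p, IsClosed (K p) := by
    rintro ⟨n, b⟩
    cases b
    · exact ((hUo n).isClosed_compl).preimage continuous_subtype_val
    · exact (hFc n).preimage continuous_subtype_val
  have hKcover : ⋃ p, K p = Set.univ := by
    ext x
    simp only [Set.mem_iUnion, Set.mem_univ, iff_true]
    by_cases hx : (x : ℕ → ℕ) ∈ S
    · rw [hFS] at hx
      obtain ⟨n, hn⟩ := Set.mem_iUnion.1 hx
      exact ⟨(n, true), by simpa [hK] using hn⟩
    · rw [hUS] at hx
      obtain ⟨n, hn⟩ := by simpa [Set.mem_iInter] using hx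
      exact ⟨(n, false), by simpa [hK] using hn⟩
  obtain ⟨⟨n, b⟩, ⟨x, hx⟩⟩ := nonempty_interior_of_iUnion_of_closed hKclosed hKcover
  have hxK : K (n, b) ∈ 𝓝 x := mem_interior_iff_mem_nhds.1 hx
  rw [nhds_subtype_eq_comap, Filter.mem_comap] at hxK
  obtain ⟨V, hV, hVK⟩ := hxK
  obtain ⟨m, hcyl⟩ := cyl_subset_of_nhds hV
  -- the node seg ↑x m is in T
  have hxC : (x : ℕ → ℕ) ∈ C := x.2
  have hτ : seg (x : ℕ → ℕ) m ∈ T := hxC m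
  obtain ⟨f, g, hfC, hgC, hif, hig, hfS, hgS⟩ := hnode _ hτ
  have hfcyl : f ∈ {h : ℕ → ℕ | ∀ i < m, h i = (x : ℕ → ℕ) i} := isInit_seg_iff.1 hif
  have hgcyl : g ∈ {h : ℕ → ℕ | ∀ i < m, h i = (x : ℕ → ℕ) i} := isInit_seg_iff.1 hig
  cases b
  · -- K = (U n)ᶜ ; but f ∈ S ⊆ U n
    have : (⟨f, hfC⟩ : C) ∈ K (n, false) := hVK (hcyl hfcyl)
    simp only [hK, Set.mem_preimage, if_neg Bool.false_ne_true] at this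
    exact this (by rw [hUS] at hfS; exact Set.mem_iInter.1 hfS n)
  · -- K = F n ⊆ S ; but g ∉ S
    have : (⟨g, hgC⟩ : C) ∈ K (n, true) := hVK (hcyl hgcyl)
    simp only [hK, Set.mem_preimage, if_pos rfl] at this
    exact hgS (hFS ▸ Set.mem_iUnion.2 ⟨n, this⟩)

section
variable {S : Set (ℕ → ℕ)} (hker : ∀ σ : List ℕ, ∃ α, σ ∉ dSeq S α)
include hker

lemma bOrd_mem (σ : List ℕ) : σ ∉ dSeq S (bOrd S σ) := csInf_mem (hker σ)

omit hker in
lemma bOrd_le {σ : List ℕ} {α : Ordinal} (h : σ ∉ dSeq S α) : bOrd S σ ≤ α := csInf_le' h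

lemma mem_of_lt_bOrd {σ : List ℕ} {α : Ordinal} (h : α < bOrd S σ) : σ ∈ dSeq S α := by
  by_contra hc
  exact absurd (bOrd_le hc) (not_le_of_gt h)

lemma bOrd_is_succ (σ : List ℕ) : ∃ γ, bOrd S σ = Order.succ γ := by
  rcases Ordinal.zero_or_succ_or_isSuccLimit (bOrd S σ) with h0 | hs | hl
  · exfalso
    have := bOrd_mem hker σ
    rw [h0, dSeq_zero] at this
    exact this trivial
  · obtain ⟨a, ha⟩ := hs; exact ⟨a, ha.symm⟩
  · exfalso
    have hmem := bOrd_mem hker σ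
    rw [mem_dSeq_limit hl] at hmem
    push_neg at hmem
    obtain ⟨β, hβ, hnm⟩ := hmem
    exact absurd (bOrd_le hnm) (not_le_of_gt hβ)

lemma bOrd_antitone (f : ℕ → ℕ) {k n : ℕ} (hkn : k ≤ n) :
    bOrd S (seg f n) ≤ bOrd S (seg f k) := by
  apply bOrd_le
  intro hmem
  exact bOrd_mem hker (seg f k) (dSeq_prefix_closed S _ f k n hkn hmem)

/-- Main claim: with Q σ := nodes with an S-extension through the current tree level. -/
noncomputable def Q (S : Set (ℕ → ℕ)) : Set (List ℕ) :=
  {σ | ∃ g, g ∈ ext (dSeq S (Ordinal.pred (bOrd S σ))) ∧ isInit σ g ∧ g ∈ S}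

lemma main_claim (f : ℕ → ℕ) : ∃ m, ∀ n, m ≤ n → (seg f n ∈ Q S ↔ f ∈ S) := by
  -- the sequence of bOrds attains its minimum
  set A : Set Ordinal := Set.range (fun n => bOrd S (seg f n)) with hA
  obtain ⟨m, hm⟩ : ∃ m, bOrd S (seg f m) = sInf A := by
    have : sInf A ∈ A := csInf_mem (Set.range_nonempty _)
    obtain ⟨m, hm⟩ := this
    exact ⟨m, hm⟩
  have hconst : ∀ n, m ≤ n → bOrd S (seg f n) = bOrd S (seg f m) := by
    intro n hn
    refine le_antisymm (bOrd_antitone hker f hn) ?_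
    rw [hm]
    exact csInf_le' ⟨n, rfl⟩
  obtain ⟨γ, hγ⟩ := bOrd_is_succ hker (seg f m)
  -- f lies in ext (dSeq S γ)
  have hsegγ : ∀ n, m ≤ n → seg f n ∈ dSeq S γ := by
    intro n hn
    apply mem_of_lt_bOrd hker
    rw [hconst n hn, hγ]
    exact Order.lt_succ γ
  have hfext : f ∈ ext (dSeq S γ) := by
    intro k
    rcases le_or_gt m k with h | h
    · exact hsegγ k h
    · exact dSeq_prefix_closed S γ f k m h.le (hsegγ m le_rfl)
  refine ⟨m, fun n hn => ?_⟩
  have hpred : Ordinal.pred (bOrd S (seg f n)) = γ := by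
    rw [hconst n hn, hγ, Ordinal.pred_succ]
  constructor
  · rintro ⟨g, hgext, hgi, hgS⟩
    by_contra hfS
    -- then seg f n ∈ derivStep S (dSeq S γ) = dSeq S (γ+1) = dSeq S (bOrd _), contradiction
    have hmem : seg f n ∈ derivStep S (dSeq S γ) := by
      rw [hpred] at hgext
      exact ⟨hsegγ n hn, g, f, hgext, hfext, hgi, isInit_seg f n, hgS, hfS⟩
    rw [← dSeq_succ, Ordinal.add_one_eq_succ, ← hγ, ← hconst n hn] at hmem
    exact bOrd_mem hker (seg f n) hmem
  · intro hfS
    exact ⟨f, by rw [hpred]; exact hfext, isInit_seg f n, hfS⟩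

lemma isDelta02_of_ker : IsDelta02 S := by
  constructor
  · refine ⟨fun m => ⋂ k, {f : ℕ → ℕ | seg f (m + k) ∈ Q S}, 
      fun m => isClosed_iInter fun k => isClosed_segMem _ _, ?_⟩
    ext f
    simp only [Set.mem_iUnion, Set.mem_iInter, Set.mem_setOf_eq]
    obtain ⟨m, hm⟩ := main_claim hker f
    constructor
    · intro hfS
      exact ⟨m, fun k => (hm (m + k) (Nat.le_add_right m k)).2 hfS⟩
    · rintro ⟨m', hm'⟩
      have := hm' m
      rw [show m' + m = m + m' from Nat.add_comm m' m] at this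
      exact (hm (m + m') (Nat.le_add_right m m')).1 this
  · refine ⟨fun m => ⋃ k, {f : ℕ → ℕ | seg f (m + k) ∈ Q S},
      fun m => isOpen_iUnion fun k => isOpen_segMem _ _, ?_⟩
    ext f
    simp only [Set.mem_iInter, Set.mem_iUnion, Set.mem_setOf_eq]
    obtain ⟨m, hm⟩ := main_claim hker f
    constructor
    · intro hfS m'
      refine ⟨m, ?_⟩
      rw [show m' + m = m' + m from rfl]
      exact (hm (m' + m) (Nat.le_add_left m m')).2 hfS
    · intro h
      obtain ⟨k, hk⟩ := h m
      exact (hm (m + k) (Nat.le_add_right m k)).1 hk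

end


theorem stmt9 (S : Set (ℕ → ℕ)) : IsDelta02 S ↔ kernel S = ∅ := by
  constructor
  · intro hΔ
    by_contra hne
    have hfixmem : kernelOrd S ∈ {α | dSeq S α = dSeq S (α + 1)} :=
      csInf_mem (exists_dSeq_fix S)
    have hfix : kernel S = derivStep S (kernel S) := by
      have : dSeq S (kernelOrd S) = dSeq S (kernelOrd S + 1) := hfixmem
      rw [dSeq_succ] at this
      exact this
    exact not_delta02_of_fix hfix (Set.nonempty_iff_ne_empty.2 hne) hΔ
  · intro h
    have hker : ∀ σ : List ℕ, ∃ α, σ ∉ dSeq S α := by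
      intro σ
      refine ⟨kernelOrd S, ?_⟩
      have : dSeq S (kernelOrd S) = ∅ := h
      rw [this]
      exact Set.notMem_empty σ
    exact isDelta02_of_ker hker
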